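/- Let p ∈ (0,∞] (with 𝕜 = ℝ or ℂ), let F be a closed 𝕜-subspace of ℓ_p with c₀ ⊆ F, and let α be a cardinal with ℵ₀ ≤ α ≤ 𝔠. Then F \ Z(F) is not (α,𝔠)-spaceable: there exists a subspace V ⊆ F with dim V = α, all of whose elements have infinitely many zero coordinates, such that no closed subspace W satisfies V ⊆ W ⊆ F, dim W = 𝔠, and every element of W has infinitely many zero coordinates. -/
import Mathlib

open Filter
open scoped ENNReal

/-- Membership in `ℓ_p` for `p ∈ (0,∞]`: for `p = ∞` boundedness, for
`p < ∞` summability of `‖x n‖^p`. -/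
def InLp {𝕜 : Type} [RCLike 𝕜] (p : ℝ≥0∞) (x : ℕ → 𝕜) : Prop :=
  if p = ⊤ then ∃ C : ℝ, ∀ n, ‖x n‖ ≤ C
  else Summable (fun n => ‖x n‖ ^ p.toReal)

/-- The `p`-distance on `ℓ_p`. -/
noncomputable def dp {𝕜 : Type} [RCLike 𝕜] (p : ℝ≥0∞) (x y : ℕ → 𝕜) : ℝ :=
  if p = ⊤ then ⨆ n, ‖x n - y n‖
  else if p < 1 then ∑' n, ‖x n - y n‖ ^ p.toReal
  else (∑' n, ‖x n - y n‖ ^ p.toReal) ^ (1 / p.toReal)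

/-- A set of sequences is closed in `ℓ_p` if it contains every `ℓ_p`-limit
(in the `p`-distance) of sequences of its elements. -/
def IsClosedInLp {𝕜 : Type} [RCLike 𝕜] (p : ℝ≥0∞) (F : Set (ℕ → 𝕜)) : Prop :=
  ∀ f : ℕ → (ℕ → 𝕜), (∀ j, f j ∈ F) → ∀ x : ℕ → 𝕜, InLp p x →
    Tendsto (fun j => dp p (f j) x) atTop (nhds 0) → x ∈ F

section Aux
variable {𝕜 : Type} [RCLike 𝕜]

def picknum (j : ℕ) : ℕ := 2 * Nat.pair j 0 + 1

def myidx (n : ℕ) : ℕ := (Nat.unpair ((n - 1) / 2)).1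

noncomputable def vv (k n : ℕ) : 𝕜 :=
  if myidx n = k ∧ n % 2 = 1 then (((2:ℝ)⁻¹ ^ n : ℝ) : 𝕜) else 0

noncomputable def bb (n : ℕ) : 𝕜 :=
  if n % 2 = 1 then (((2:ℝ)⁻¹ ^ n : ℝ) : 𝕜) else 0

noncomputable def uu (t : ℝ) (n : ℕ) : 𝕜 :=
  if n % 2 = 0 then ((t ^ n : ℝ) : 𝕜) else 0

lemma picknum_mod (j : ℕ) : picknum j % 2 = 1 := by unfold picknum; omega

lemma myidx_picknum (j : ℕ) : myidx (picknum j) = j := by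
  unfold myidx picknum
  have : (2 * Nat.pair j 0 + 1 - 1) / 2 = Nat.pair j 0 := by omega
  rw [this, Nat.unpair_pair]

lemma picknum_inj : Function.Injective picknum := by
  intro a b h
  have := congrArg myidx h
  rwa [myidx_picknum, myidx_picknum] at this

lemma myidx_le (n : ℕ) : myidx n ≤ n :=
  (Nat.unpair_left_le _).trans ((Nat.div_le_self _ _).trans (Nat.sub_le _ _))

lemma vv_picknum (k j : ℕ) :
    (vv k (picknum j) : 𝕜) = if j = k then (((2:ℝ)⁻¹ ^ picknum j : ℝ) : 𝕜) else 0 := by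
  unfold vv
  rw [myidx_picknum]
  by_cases h : j = k <;> simp [h, picknum_mod]

lemma norm_vv_le (k n : ℕ) : ‖(vv k n : 𝕜)‖ ≤ (2:ℝ)⁻¹ ^ n := by
  unfold vv; split
  · rw [RCLike.norm_ofReal, abs_of_nonneg (by positivity)]
  · simp

lemma norm_bb_le (n : ℕ) : ‖(bb n : 𝕜)‖ ≤ (2:ℝ)⁻¹ ^ n := by
  unfold bb; split
  · rw [RCLike.norm_ofReal, abs_of_nonneg (by positivity)]
  · simp

lemma norm_uu_le {t : ℝ} (ht : t ∈ Set.Ioo (0:ℝ) 2⁻¹) (n : ℕ) :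
    ‖(uu t n : 𝕜)‖ ≤ (2:ℝ)⁻¹ ^ n := by
  unfold uu; split
  · rw [RCLike.norm_ofReal, abs_of_nonneg (pow_nonneg ht.1.le n)]
    exact pow_le_pow_left₀ ht.1.le ht.2.le n
  · simp

lemma li_vv : LinearIndependent 𝕜 (vv (𝕜 := 𝕜)) := by
  rw [linearIndependent_iff']
  intro s g hsum i hi
  have h := congrFun hsum (picknum i)
  simp only [Finset.sum_apply, Pi.smul_apply, Pi.zero_apply, smul_eq_mul] at h
  rw [Finset.sum_eq_single i] at h
  · rw [vv_picknum, if_pos rfl] at h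
    have hne : (((2:ℝ)⁻¹ ^ picknum i : ℝ) : 𝕜) ≠ 0 := by
      simp only [ne_eq, RCLike.ofReal_eq_zero]
      positivity
    exact (mul_eq_zero.mp h).resolve_right hne
  · intro k _ hk
    rw [vv_picknum, if_neg (fun h' => hk h'.symm), mul_zero]
  · intro h'; exact absurd hi h'

/-- Restriction to even coordinates, as a linear map into functions on `Multiplicative ℕ`. -/
noncomputable def evenRes : ((ℕ → 𝕜)) →ₗ[𝕜] (Multiplicative ℕ → 𝕜) where
  toFun x := fun m => x (2 * (Multiplicative.toAdd m))
  map_add' _ _ := rfl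
  map_smul' _ _ := rfl

lemma li_uu {ι : Type} (t : ι → ℝ) (ht : ∀ i, t i ∈ Set.Ioo (0:ℝ) 2⁻¹)
    (htinj : Function.Injective t) :
    LinearIndependent 𝕜 (fun i => (uu (t i) : ℕ → 𝕜)) := by
  apply LinearIndependent.of_comp (evenRes (𝕜 := 𝕜))
  have key : (⇑(evenRes (𝕜 := 𝕜)) ∘ fun i => uu (t i)) =
      (fun f : Multiplicative ℕ →* 𝕜 => (f : Multiplicative ℕ → 𝕜)) ∘
        (fun i => powersHom 𝕜 (((t i ^ 2 : ℝ) : 𝕜))) := by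
    funext i m
    simp only [Function.comp_apply, evenRes, LinearMap.coe_mk, AddHom.coe_mk, uu,
      Nat.mul_mod_right, if_true]
    show ((t i ^ (2 * Multiplicative.toAdd m) : ℝ) : 𝕜) = ((t i ^ 2 : ℝ) : 𝕜) ^ (Multiplicative.toAdd m)
    push_cast
    rw [← pow_mul]
  rw [key]
  apply (linearIndependent_monoidHom (Multiplicative ℕ) 𝕜).comp
  intro a b hab
  apply htinj
  have h2 : ((t a ^ 2 : ℝ) : 𝕜) = ((t b ^ 2 : ℝ) : 𝕜) := (powersHom 𝕜).injective hab
  have h3 : t a ^ 2 = t b ^ 2 := RCLike.ofReal_injective h2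
  nlinarith [(ht a).1, (ht b).1]

lemma sum_vv (J n : ℕ) :
    (∑ k ∈ Finset.range J, (vv k : ℕ → 𝕜)) n = if myidx n < J then bb n else 0 := by
  rw [Finset.sum_apply]
  have : ∀ k, (vv k n : 𝕜) = if myidx n = k then (if n % 2 = 1 then (((2:ℝ)⁻¹ ^ n : ℝ) : 𝕜) else 0) else 0 := by
    intro k; unfold vv; by_cases h : myidx n = k <;> by_cases h2 : n % 2 = 1 <;> simp [h, h2]
  simp_rw [this]
  rw [Finset.sum_ite_eq]
  simp only [Finset.mem_range]
  unfold bb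
  split <;> rfl

lemma diff_norm_le (J n : ℕ) :
    ‖(∑ k ∈ Finset.range J, (vv k : ℕ → 𝕜)) n - bb n‖ ≤ if J ≤ n then (2:ℝ)⁻¹ ^ n else 0 := by
  rw [sum_vv]
  by_cases h : myidx n < J
  · rw [if_pos h, sub_self, norm_zero]
    split <;> positivity
  · have hn : J ≤ n := le_trans (not_lt.mp h) (myidx_le n)
    rw [if_neg h, zero_sub, norm_neg, if_pos hn]
    exact norm_bb_le n

lemma halfpow (q : ℝ) (n : ℕ) : ((2:ℝ)⁻¹ ^ n) ^ q = ((2:ℝ)⁻¹ ^ q) ^ n := by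
  rw [← Real.rpow_natCast ((2:ℝ)⁻¹) n, ← Real.rpow_mul (by norm_num), mul_comm,
    Real.rpow_mul (by norm_num), Real.rpow_natCast]

lemma inLp_bb (p : ℝ≥0∞) (hp : 0 < p) : InLp p (bb (𝕜 := 𝕜)) := by
  unfold InLp
  by_cases htop : p = ⊤
  · rw [if_pos htop]
    exact ⟨1, fun n => (norm_bb_le n).trans (pow_le_one₀ (by norm_num) (by norm_num))⟩
  · rw [if_neg htop]
    have hq : 0 < p.toReal := ENNReal.toReal_pos hp.ne' htop
    apply Summable.of_nonneg_of_le (fun n => Real.rpow_nonneg (norm_nonneg _) _)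
      (fun n => ?_)
      (summable_geometric_of_lt_one (r := (2:ℝ)⁻¹ ^ p.toReal)
        (Real.rpow_nonneg (by norm_num) _) (Real.rpow_lt_one (by norm_num) (by norm_num) hq))
    calc ‖(bb n : 𝕜)‖ ^ p.toReal ≤ ((2:ℝ)⁻¹ ^ n) ^ p.toReal :=
          Real.rpow_le_rpow (norm_nonneg _) (norm_bb_le n) hq.le
      _ = ((2:ℝ)⁻¹ ^ p.toReal) ^ n := halfpow _ n

lemma tendsto_dp (p : ℝ≥0∞) (hp : 0 < p) :
    Tendsto (fun J => dp p (∑ k ∈ Finset.range J, (vv k : ℕ → 𝕜)) bb) atTop (nhds 0) := by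
  by_cases htop : p = ⊤
  · simp only [dp, if_pos htop]
    have hb : ∀ J n, ‖(∑ k ∈ Finset.range J, (vv k : ℕ → 𝕜)) n - bb n‖ ≤ (2:ℝ)⁻¹ ^ J := by
      intro J n
      refine (diff_norm_le J n).trans ?_
      split
      · exact pow_le_pow_of_le_one (by norm_num) (by norm_num) ‹_›
      · positivity
    apply tendsto_of_tendsto_of_tendsto_of_le_of_le tendsto_const_nhds
      (tendsto_pow_atTop_nhds_zero_of_lt_one (by norm_num : (0:ℝ) ≤ 2⁻¹) (by norm_num))
    · intro J
      have hbdd : BddAbove (Set.range fun n => ‖(∑ k ∈ Finset.range J, (vv k : ℕ → 𝕜)) n - bb n‖) :=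
        ⟨(2:ℝ)⁻¹ ^ J, by rintro _ ⟨n, rfl⟩; exact hb J n⟩
      exact le_trans (norm_nonneg _) (le_ciSup hbdd 0)
    · intro J; exact ciSup_le (hb J)
  · have hq : 0 < p.toReal := ENNReal.toReal_pos hp.ne' htop
    set q := p.toReal with hqdef
    set r : ℝ := (2:ℝ)⁻¹ ^ q with hrdef
    have hr0 : 0 < r := Real.rpow_pos_of_pos (by norm_num) q
    have hr1 : r < 1 := Real.rpow_lt_one (by norm_num) (by norm_num) hq
    set s : ℝ := Real.sqrt r with hsdef
    have hs0 : 0 < s := Real.sqrt_pos.mpr hr0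
    have hs1 : s < 1 := by
      have := Real.sqrt_lt_sqrt hr0.le hr1
      simpa using this
    have hss : s * s = r := Real.mul_self_sqrt hr0.le
    have claim : ∀ J n, ‖(∑ k ∈ Finset.range J, (vv k : ℕ → 𝕜)) n - bb n‖ ^ q ≤ s ^ J * s ^ n := by
      intro J n
      by_cases hn : J ≤ n
      · have h1 : ‖(∑ k ∈ Finset.range J, (vv k : ℕ → 𝕜)) n - bb n‖ ≤ (2:ℝ)⁻¹ ^ n := by
          have := diff_norm_le (𝕜 := 𝕜) J n; rwa [if_pos hn] at this
        calc ‖(∑ k ∈ Finset.range J, (vv k : ℕ → 𝕜)) n - bb n‖ ^ q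
            ≤ ((2:ℝ)⁻¹ ^ n) ^ q := Real.rpow_le_rpow (norm_nonneg _) h1 hq.le
          _ = r ^ n := halfpow q n
          _ = s ^ n * s ^ n := by rw [← hss, mul_pow]
          _ ≤ s ^ J * s ^ n :=
              mul_le_mul_of_nonneg_right (pow_le_pow_of_le_one hs0.le hs1.le hn)
                (pow_nonneg hs0.le n)
      · have h1 : ‖(∑ k ∈ Finset.range J, (vv k : ℕ → 𝕜)) n - bb n‖ ≤ 0 := by
          have := diff_norm_le (𝕜 := 𝕜) J n; rwa [if_neg hn] at this
        have h2 : ‖(∑ k ∈ Finset.range J, (vv k : ℕ → 𝕜)) n - bb n‖ = 0 :=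
          le_antisymm h1 (norm_nonneg _)
        rw [h2, Real.zero_rpow hq.ne']
        positivity
    have hsumR : ∀ J : ℕ, Summable (fun n => s ^ J * s ^ n) :=
      fun J => (summable_geometric_of_lt_one hs0.le hs1).mul_left _
    have hsumL : ∀ J, Summable (fun n => ‖(∑ k ∈ Finset.range J, (vv k : ℕ → 𝕜)) n - bb n‖ ^ q) :=
      fun J => Summable.of_nonneg_of_le (fun n => Real.rpow_nonneg (norm_nonneg _) q)
        (claim J) (hsumR J)
    set T : ℕ → ℝ := fun J => ∑' n, ‖(∑ k ∈ Finset.range J, (vv k : ℕ → 𝕜)) n - bb n‖ ^ q with hTdef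
    have hT0 : ∀ J, 0 ≤ T J := fun J => tsum_nonneg (fun n => Real.rpow_nonneg (norm_nonneg _) q)
    have hTle : ∀ J, T J ≤ s ^ J * (1 - s)⁻¹ := by
      intro J
      calc T J ≤ ∑' n, s ^ J * s ^ n := Summable.tsum_le_tsum (claim J) (hsumL J) (hsumR J)
        _ = s ^ J * (1 - s)⁻¹ := by rw [tsum_mul_left, tsum_geometric_of_lt_one hs0.le hs1]
    have hTtend : Tendsto T atTop (nhds 0) := by
      apply tendsto_of_tendsto_of_tendsto_of_le_of_le tendsto_const_nhds
        (by simpa using (tendsto_pow_atTop_nhds_zero_of_lt_one hs0.le hs1).mul_const (1 - s)⁻¹)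
        hT0 hTle
    by_cases h1 : p < 1
    · simpa only [dp, if_neg htop, if_pos h1] using hTtend
    · simp only [dp, if_neg htop, if_neg h1]
      have hc : ContinuousAt (fun x : ℝ => x ^ (1 / q)) 0 :=
        Real.continuousAt_rpow_const 0 (1 / q) (Or.inr (by positivity))
      have h2 : Tendsto ((fun x : ℝ => x ^ (1 / q)) ∘ T) atTop (nhds ((0:ℝ) ^ (1 / q))) :=
        hc.tendsto.comp hTtend
      rw [Real.zero_rpow (by positivity : (1:ℝ) / q ≠ 0)] at h2
      exact h2

/-- Sequences supported on the odd coordinates. -/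
def oddSupp : Submodule 𝕜 (ℕ → 𝕜) where
  carrier := {x | ∀ n, n % 2 = 0 → x n = 0}
  add_mem' hx hy n hn := by rw [Pi.add_apply, hx n hn, hy n hn, add_zero]
  zero_mem' _ _ := rfl
  smul_mem' c x hx n hn := by rw [Pi.smul_apply, hx n hn, smul_zero]

/-- Sequences supported on the even coordinates. -/
def evenSupp : Submodule 𝕜 (ℕ → 𝕜) where
  carrier := {x | ∀ n, n % 2 = 1 → x n = 0}
  add_mem' hx hy n hn := by rw [Pi.add_apply, hx n hn, hy n hn, add_zero]
  zero_mem' _ _ := rfl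
  smul_mem' c x hx n hn := by rw [Pi.smul_apply, hx n hn, smul_zero]

lemma disjoint_odd_even : Disjoint (oddSupp (𝕜 := 𝕜)) (evenSupp (𝕜 := 𝕜)) := by
  rw [Submodule.disjoint_def]
  intro x hx1 hx2
  funext n
  rcases Nat.mod_two_eq_zero_or_one n with h | h
  · exact hx1 n h
  · exact hx2 n h

end Aux

/-- Let `p ∈ (0,∞]`, `F` a closed subspace of `ℓ_p`
containing `c₀`, and `α` a cardinal with `ℵ₀ ≤ α ≤ 𝔠`.  Then `F \ Z(F)` is
not `(α, 𝔠)`-spaceable: there is a subspace `V ≤ F` of dimension `α` all of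
whose elements have infinitely many zero coordinates such that no closed
subspace `W` satisfies `V ≤ W ≤ F`, `dim W = 𝔠`, and every element of `W` has
infinitely many zero coordinates. -/
theorem stmt15 {𝕜 : Type} [RCLike 𝕜] (p : ℝ≥0∞) (hp : 0 < p)
    (F : Submodule 𝕜 (ℕ → 𝕜))
    (hFp : (↑F : Set (ℕ → 𝕜)) ⊆ {x | InLp p x})
    (hFc : IsClosedInLp p (↑F : Set (ℕ → 𝕜)))
    (hc0 : ∀ x : ℕ → 𝕜, Tendsto x atTop (nhds 0) → x ∈ F)
    (α : Cardinal) (hα₁ : Cardinal.aleph0 ≤ α) (hα₂ : α ≤ Cardinal.continuum) :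
    ∃ V : Submodule 𝕜 (ℕ → 𝕜), V ≤ F ∧
      Module.rank 𝕜 ↥V = α ∧
      (∀ x ∈ V, {n : ℕ | x n = 0}.Infinite) ∧
      ¬ ∃ W : Submodule 𝕜 (ℕ → 𝕜), V ≤ W ∧ W ≤ F ∧
          IsClosedInLp p (↑W : Set (ℕ → 𝕜)) ∧
          Module.rank 𝕜 ↥W = Cardinal.continuum ∧
          ∀ x ∈ W, {n : ℕ | x n = 0}.Infinite := by
  classical
  -- choose an α-sized set of parameters in (0, 1/2)
  have hle : α ≤ Cardinal.mk ↥(Set.Ioo (0:ℝ) 2⁻¹) := by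
    rw [Cardinal.mk_Ioo_real (by norm_num : (0:ℝ) < 2⁻¹)]; exact hα₂
  obtain ⟨S', hS'⟩ := Cardinal.le_mk_iff_exists_set.mp hle
  let ι' := ↥S'
  let t : ι' → ℝ := fun i => ((i : ↥(Set.Ioo (0:ℝ) 2⁻¹)) : ℝ)
  have ht : ∀ i, t i ∈ Set.Ioo (0:ℝ) 2⁻¹ := fun i => (i : ↥(Set.Ioo (0:ℝ) 2⁻¹)).2
  have htinj : Function.Injective t :=
    Subtype.val_injective.comp Subtype.val_injective
  -- the generating family
  let w : ℕ ⊕ ι' → (ℕ → 𝕜) := Sum.elim vv (fun i => uu (t i))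
  have hspan_v : Submodule.span 𝕜 (Set.range (vv (𝕜 := 𝕜))) ≤ oddSupp := by
    rw [Submodule.span_le]
    rintro _ ⟨k, rfl⟩ n hn
    unfold vv
    rw [if_neg]
    rintro ⟨-, h2⟩; omega
  have hspan_u : Submodule.span 𝕜 (Set.range (fun i => (uu (t i) : ℕ → 𝕜))) ≤ evenSupp := by
    rw [Submodule.span_le]
    rintro _ ⟨i, rfl⟩ n hn
    show (if n % 2 = 0 then ((t i ^ n : ℝ) : 𝕜) else 0) = 0
    rw [if_neg (by omega)]
  have hli_u : LinearIndependent 𝕜 (fun i : ι' => (uu (t i) : ℕ → 𝕜)) := li_uu t ht htinj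
  have hdisj : Disjoint (Submodule.span 𝕜 (Set.range (vv (𝕜 := 𝕜))))
      (Submodule.span 𝕜 (Set.range (fun i : ι' => (uu (t i) : ℕ → 𝕜)))) :=
    disjoint_odd_even.mono hspan_v hspan_u
  have hw : LinearIndependent 𝕜 w :=
    show LinearIndependent 𝕜 (Sum.elim (vv (𝕜 := 𝕜)) (fun i : ι' => uu (t i))) from
      LinearIndependent.sum_type li_vv hli_u hdisj
  refine ⟨Submodule.span 𝕜 (Set.range w), ?_, ?_, ?_, ?_⟩
  · -- V ≤ F
    rw [Submodule.span_le]
    rintro _ ⟨i, rfl⟩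
    rcases i with k | i
    · exact hc0 _ (squeeze_zero_norm (norm_vv_le k)
        (tendsto_pow_atTop_nhds_zero_of_lt_one (by norm_num) (by norm_num)))
    · exact hc0 _ (squeeze_zero_norm (norm_uu_le (ht i))
        (tendsto_pow_atTop_nhds_zero_of_lt_one (by norm_num) (by norm_num)))
  · -- rank
    rw [rank_span hw]
    have h1 : Cardinal.mk ↥(Set.range w) = Cardinal.mk (ℕ ⊕ ι') := by
      have := Cardinal.mk_range_eq_of_injective hw.injective
      simpa using this
    rw [h1, Cardinal.mk_sum, Cardinal.lift_id, Cardinal.lift_id, Cardinal.mk_nat, hS']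
    exact Cardinal.add_eq_right hα₁ hα₁
  · -- every element of V has infinitely many zeros
    intro x hx
    obtain ⟨c, hc⟩ := Finsupp.mem_span_range_iff_exists_finsupp.mp hx
    set K : Set ℕ := Sum.inl ⁻¹' (↑c.support : Set (ℕ ⊕ ι')) with hKdef
    have hK : K.Finite := c.support.finite_toSet.preimage Sum.inl_injective.injOn
    have hzero : ∀ j ∉ K, x (picknum j) = 0 := by
      intro j hj
      rw [← hc, Finsupp.sum, Finset.sum_apply]
      apply Finset.sum_eq_zero
      rintro (k | i) hi
      · have hkj : j ≠ k := by
          rintro rfl; exact hj hi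
        show c (Sum.inl k) • (vv k (picknum j) : 𝕜) = 0
        rw [vv_picknum, if_neg hkj, smul_zero]
      · show c (Sum.inr i) • (uu (t i) (picknum j) : 𝕜) = 0
        unfold uu
        rw [if_neg (by have := picknum_mod j; omega), smul_zero]
    have hsub : picknum '' Kᶜ ⊆ {n | x n = 0} := by
      rintro _ ⟨j, hj, rfl⟩; exact hzero j hj
    exact ((hK.infinite_compl).image picknum_inj.injOn).mono hsub
  · -- no such W
    rintro ⟨W, hVW, hWF, hWc, hWrank, hWinf⟩
    have hvW : ∀ k, (vv k : ℕ → 𝕜) ∈ W := fun k =>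
      hVW (Submodule.subset_span ⟨Sum.inl k, rfl⟩)
    have hsJ : ∀ J, (∑ k ∈ Finset.range J, (vv k : ℕ → 𝕜)) ∈ W := fun J =>
      Submodule.sum_mem _ (fun k _ => hvW k)
    have hbW : (bb : ℕ → 𝕜) ∈ W :=
      hWc _ hsJ bb (inLp_bb p hp) (tendsto_dp p hp)
    have hne : Nonempty ι' := by
      rw [← Cardinal.mk_ne_zero_iff, hS']
      exact ((Cardinal.aleph0_pos).trans_le hα₁).ne'
    obtain ⟨i0⟩ := hne
    have huW : (uu (t i0) : ℕ → 𝕜) ∈ W :=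
      hVW (Submodule.subset_span ⟨Sum.inr i0, rfl⟩)
    have hxW : (bb + uu (t i0) : ℕ → 𝕜) ∈ W := W.add_mem hbW huW
    obtain ⟨n, hn⟩ := (hWinf _ hxW).nonempty
    simp only [Set.mem_setOf_eq, Pi.add_apply] at hn
    rcases Nat.mod_two_eq_zero_or_one n with h | h
    · have h' : ¬ (n % 2 = 1) := by omega
      rw [show (bb n : 𝕜) = 0 from if_neg h', zero_add] at hn
      unfold uu at hn
      rw [if_pos h] at hn
      have : (t i0) ^ n = 0 := by exact_mod_cast hn
      exact absurd this (pow_pos (ht i0).1 n).ne'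
    · have h' : ¬ (n % 2 = 0) := by omega
      rw [show (uu (t i0) n : 𝕜) = 0 from if_neg h', add_zero] at hn
      unfold bb at hn
      rw [if_pos h] at hn
      have : ((2:ℝ)⁻¹) ^ n = 0 := by exact_mod_cast hn
      exact absurd this (by positivity)
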